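/- Let π be a probability measure on ℝ with π((0,∞)) = 1. Then there exists ζ ∈ ℝ such that the test φ⁺_ζ, the indicator of (ζ,∞)×(b₁,∞) ∪ (−∞,ζ)×(−∞,b₂), belongs to Φ₀(α) and satisfies ∫ β_{φ⁺_ζ}(θ) dπ(θ) > ∫ β_φ(θ) dπ(θ). Consequently, Moran's test φ is not an α-level π-Bayes test in Φ₀(α) for any π concentrated on (0,∞). -/

import Mathlib

open MeasureTheory Filter Set Topology ENNReal

noncomputable def cdf' (f : ℝ → ℝ) (t : ℝ) : ℝ := ∫ x in Set.Iic t, f x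

lemma aux_integrable {f : ℝ → ℝ} (hi : ∫ x, f x = 1) : Integrable f := by
  by_contra h; rw [integral_undef h] at hi; norm_num at hi

lemma cdf_sub (f : ℝ → ℝ) (hf : Integrable f) (s t : ℝ) :
    cdf' f t - cdf' f s = ∫ x in s..t, f x :=
  intervalIntegral.integral_Iic_sub_Iic hf.integrableOn hf.integrableOn

lemma cdf_continuous {f : ℝ → ℝ} (hf : Integrable f) : Continuous (cdf' f) := by
  have h : ∀ t, cdf' f t = (∫ x in (0:ℝ)..t, f x) + cdf' f 0 := by
    intro t; have := cdf_sub f hf 0 t; linarith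
  rw [funext h]
  exact (intervalIntegral.continuous_primitive (fun a b => hf.intervalIntegrable) 0).add
    continuous_const

lemma cdf_strictMono {f : ℝ → ℝ} (hp : ∀ x, 0 < f x)
    (hf : Integrable f) : StrictMono (cdf' f) := by
  intro s t hst
  have h := cdf_sub f hf s t
  have pos : 0 < ∫ x in s..t, f x :=
    intervalIntegral.intervalIntegral_pos_of_pos (f := f) hf.intervalIntegrable hp hst
  linarith

lemma cdf_nonneg {f : ℝ → ℝ} (hp : ∀ x, 0 < f x) (t : ℝ) : 0 ≤ cdf' f t :=
  setIntegral_nonneg measurableSet_Iic (fun x _ => (hp x).le)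

lemma cdf_le_one {f : ℝ → ℝ} (hp : ∀ x, 0 < f x) (hf : Integrable f)
    (hi : ∫ x, f x = 1) (t : ℝ) : cdf' f t ≤ 1 := by
  have := setIntegral_le_integral (s := Set.Iic t) hf
    (Filter.Eventually.of_forall (fun x => (hp x).le))
  rw [hi] at this; exact this

lemma cdf_tendsto_atTop {f : ℝ → ℝ} (hf : Integrable f) (hi : ∫ x, f x = 1) :
    Tendsto (cdf' f) atTop (𝓝 1) := by
  have h := tendsto_setIntegral_of_monotone (ι := ℝ) (s := fun i => Iic i) (μ := volume)
    (fun i => measurableSet_Iic) (fun i j h => Iic_subset_Iic.2 h)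
    (by rw [iUnion_Iic]; exact hf.integrableOn)
  exact (by simpa [iUnion_Iic, hi] using h : Tendsto (fun i => ∫ x in Iic i, f x) atTop (𝓝 1))

lemma cdf_tendsto_atBot {f : ℝ → ℝ} (hf : Integrable f) :
    Tendsto (cdf' f) atBot (𝓝 0) := by
  have hempty : ⋂ i : ℝ, Iic (-i) = (∅ : Set ℝ) := by
    ext x; simp only [mem_iInter, mem_Iic, mem_empty_iff_false, iff_false, not_forall, not_le]
    exact ⟨-(x - 1), by linarith⟩
  have h := tendsto_setIntegral_of_antitone (ι := ℝ) (s := fun i => Iic (-i)) (μ := volume)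
    (fun i => measurableSet_Iic) (fun i j h => Iic_subset_Iic.2 (by linarith))
    ⟨0, hf.integrableOn⟩
  rw [hempty] at h
  simp only [Measure.restrict_empty, integral_zero_measure] at h
  have hneg : Tendsto (fun x : ℝ => -x) atBot atTop := tendsto_neg_atBot_atTop
  have h2 := h.comp hneg
  have : ((fun i => ∫ (x : ℝ) in Iic (-i), f x) ∘ fun x : ℝ => -x) = cdf' f := by
    funext t; simp [Function.comp, cdf']
  rwa [this] at h2

lemma cdf_quantile {f : ℝ → ℝ} (hp : ∀ x, 0 < f x) (hf : Integrable f)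
    (hi : ∫ x, f x = 1) {c : ℝ} (hc0 : 0 < c) (hc1 : c < 1) :
    cdf' f (sInf {t : ℝ | c ≤ cdf' f t}) = c := by
  obtain ⟨u, hu⟩ : ∃ u, cdf' f u < c :=
    ((cdf_tendsto_atBot hf).eventually (eventually_lt_nhds hc0)).exists
  obtain ⟨v, hv⟩ : ∃ v, c < cdf' f v :=
    ((cdf_tendsto_atTop hf hi).eventually (eventually_gt_nhds hc1)).exists
  obtain ⟨t₀, ht₀⟩ : c ∈ range (cdf' f) :=
    intermediate_value_univ u v (cdf_continuous hf) ⟨hu.le, hv.le⟩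
  have hset : {t : ℝ | c ≤ cdf' f t} = Ici t₀ := by
    ext t
    simp only [mem_setOf_eq, mem_Ici, ← ht₀]
    exact ⟨fun h => (cdf_strictMono hp hf).le_iff_le.1 h,
      fun h => (cdf_strictMono hp hf).le_iff_le.2 h⟩
  rw [hset, csInf_Ici, ht₀]

lemma shift_Ioi (f : ℝ → ℝ) (θ c : ℝ) :
    ∫ x in Ioi c, f (x - θ) = ∫ x in Ioi (c - θ), f x := by
  rw [← integral_indicator measurableSet_Ioi, ← integral_indicator measurableSet_Ioi]
  rw [← integral_sub_right_eq_self (fun x => (Ioi (c - θ)).indicator f x) θ]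
  congr 1; funext x
  by_cases h : c < x
  · rw [indicator_of_mem (by exact h) (fun x => f (x - θ)),
      indicator_of_mem (by simp only [mem_Ioi]; linarith) f]
  · rw [indicator_of_notMem (by exact h),
      indicator_of_notMem (by simp only [mem_Ioi]; push_neg at h ⊢; linarith)]

lemma shift_Iio (f : ℝ → ℝ) (θ c : ℝ) :
    ∫ x in Iio c, f (x - θ) = ∫ x in Iio (c - θ), f x := by
  rw [← integral_indicator measurableSet_Iio, ← integral_indicator measurableSet_Iio]
  rw [← integral_sub_right_eq_self (fun x => (Iio (c - θ)).indicator f x) θ]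
  congr 1; funext x
  by_cases h : x < c
  · rw [indicator_of_mem (by exact h) (fun x => f (x - θ)),
      indicator_of_mem (by simp only [mem_Iio]; linarith) f]
  · rw [indicator_of_notMem (by exact h),
      indicator_of_notMem (by simp only [mem_Iio]; push_neg at h ⊢; linarith)]

lemma integral_Ioi_cdf {f : ℝ → ℝ} (hf : Integrable f) (hi : ∫ x, f x = 1) (t : ℝ) :
    ∫ x in Ioi t, f x = 1 - cdf' f t := by
  have := intervalIntegral.integral_Iic_add_Ioi (b := t) (f := f) (μ := volume)
    hf.integrableOn hf.integrableOn
  rw [hi] at this; unfold cdf'; linarith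

lemma integral_Iio_cdf (f : ℝ → ℝ) (t : ℝ) :
    ∫ x in Iio t, f x = cdf' f t := (integral_Iic_eq_integral_Iio).symm

lemma beta_formula (f₁ f₂ : ℝ → ℝ) (h₁c : Continuous f₁) (h₂c : Continuous f₂)
    (h₁p : ∀ x, 0 < f₁ x) (h₂p : ∀ x, 0 < f₂ x)
    (hf₁ : Integrable f₁) (hf₂ : Integrable f₂)
    (h₁i : ∫ x, f₁ x = 1) (h₂i : ∫ x, f₂ x = 1)
    (ζ b₁ b₂ θ : ℝ) :
    ∫ x : ℝ × ℝ, (((Ioi ζ ×ˢ Ioi b₁) ∪ (Iio ζ ×ˢ Iio b₂)).indicator (fun _ => (1:ℝ)) x)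
      ∂((volume : Measure (ℝ × ℝ)).withDensity
        fun x => ENNReal.ofReal (f₁ (x.1 - θ) * f₂ (x.2 - θ)))
    = (1 - cdf' f₁ (ζ - θ)) * (1 - cdf' f₂ (b₁ - θ))
      + cdf' f₁ (ζ - θ) * cdf' f₂ (b₂ - θ) := by
  set w : ℝ × ℝ → ℝ := fun x => f₁ (x.1 - θ) * f₂ (x.2 - θ) with hw
  have hwnn : ∀ x, 0 ≤ w x := fun x => mul_nonneg (h₁p _).le (h₂p _).le
  have hwc : Continuous w :=
    (h₁c.comp (continuous_fst.sub continuous_const)).mul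
      (h₂c.comp (continuous_snd.sub continuous_const))
  have hwm : Measurable fun x => (w x).toNNReal := hwc.measurable.real_toNNReal
  set A : Set (ℝ × ℝ) := (Ioi ζ ×ˢ Ioi b₁) ∪ (Iio ζ ×ˢ Iio b₂) with hA
  rw [show (fun x : ℝ × ℝ => ENNReal.ofReal (f₁ (x.1 - θ) * f₂ (x.2 - θ)))
      = fun x => ENNReal.ofReal (w x) from rfl]
  have hwint : Integrable w (volume : Measure (ℝ × ℝ)) := by
    rw [hw, Measure.volume_eq_prod]
    exact (hf₁.comp_sub_right θ).mul_prod (hf₂.comp_sub_right θ)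
  have step1 : ∫ x : ℝ × ℝ, A.indicator (fun _ => (1:ℝ)) x
      ∂((volume : Measure (ℝ × ℝ)).withDensity fun x => ENNReal.ofReal (w x))
      = ∫ x : ℝ × ℝ, A.indicator w x := by
    have : (fun x : ℝ × ℝ => ENNReal.ofReal (w x))
        = fun x => ((w x).toNNReal : ℝ≥0∞) := rfl
    rw [this, integral_withDensity_eq_integral_smul hwm]
    congr 1; funext x
    by_cases hx : x ∈ A
    · rw [indicator_of_mem hx, indicator_of_mem hx]
      simp only [NNReal.smul_def, smul_eq_mul, mul_one, Real.coe_toNNReal _ (hwnn x)]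
    · rw [indicator_of_notMem hx, indicator_of_notMem hx, smul_zero]
  rw [step1]
  have hdisj : Disjoint (Ioi ζ ×ˢ Ioi b₁) (Iio ζ ×ˢ Iio b₂) := by
    rw [Set.disjoint_left]
    rintro ⟨x, y⟩ ⟨hx1, _⟩ ⟨hx2, _⟩
    exact absurd (show x < ζ from hx2) (not_lt.2 (le_of_lt (show ζ < x from hx1)))
  have hm1 : MeasurableSet (Ioi ζ ×ˢ Ioi b₁ : Set (ℝ × ℝ)) :=
    measurableSet_Ioi.prod measurableSet_Ioi
  have hm2 : MeasurableSet (Iio ζ ×ˢ Iio b₂ : Set (ℝ × ℝ)) :=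
    measurableSet_Iio.prod measurableSet_Iio
  rw [integral_indicator (hm1.union hm2),
    setIntegral_union hdisj hm2 hwint.integrableOn hwint.integrableOn]
  have prod_piece : ∀ (S T : Set ℝ), MeasurableSet S → MeasurableSet T →
      ∫ x : ℝ × ℝ in S ×ˢ T, w x
      = (∫ x in S, f₁ (x - θ)) * (∫ x in T, f₂ (x - θ)) := by
    intro S T hS hT
    rw [hw, Measure.volume_eq_prod, ← Measure.prod_restrict]
    exact integral_prod_mul (fun x => f₁ (x - θ)) (fun y => f₂ (y - θ))
  rw [prod_piece _ _ measurableSet_Ioi measurableSet_Ioi,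
    prod_piece _ _ measurableSet_Iio measurableSet_Iio,
    shift_Ioi, shift_Ioi, shift_Iio, shift_Iio,
    integral_Ioi_cdf hf₁ h₁i, integral_Ioi_cdf hf₂ h₂i,
    integral_Iio_cdf, integral_Iio_cdf]

/- STATEMENT 11: If π is a probability measure on ℝ with π((0,∞)) = 1, then there is
ζ ∈ ℝ such that the test φ⁺_ζ (indicator of (ζ,∞)×(b₁,∞) ∪ (−∞,ζ)×(−∞,b₂)) belongs to
Φ₀(α) and has strictly larger π-average power than Moran's test φ. Consequently, φ is
not an α-level π-Bayes test in Φ₀(α). -/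
theorem stmt_11
    (f₁ f₂ : ℝ → ℝ)
    (h₁c : Continuous f₁) (h₂c : Continuous f₂)
    (h₁p : ∀ x, 0 < f₁ x) (h₂p : ∀ x, 0 < f₂ x)
    (M : ℝ) (h₁b : ∀ x, f₁ x ≤ M) (h₂b : ∀ x, f₂ x ≤ M)
    (h₁i : ∫ x, f₁ x = 1) (h₂i : ∫ x, f₂ x = 1)
    (P : ℝ → Measure (ℝ × ℝ))
    (hP : P = fun θ => (volume : Measure (ℝ × ℝ)).withDensity
      (fun x => ENNReal.ofReal (f₁ (x.1 - θ) * f₂ (x.2 - θ))))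
    (α : ℝ) (hα : α ∈ Set.Ioo (0 : ℝ) 1)
    (b₁ b₂ : ℝ)
    (hb₁ : b₁ = sInf {t : ℝ | 1 - α ≤ ∫ x in Set.Iic t, f₂ x})
    (hb₂ : b₂ = sInf {t : ℝ | α ≤ ∫ x in Set.Iic t, f₂ x})
    (a : ℝ)
    -- power of an arbitrary test; Moran's test φ; the one-parameter family φ⁺_ζ
    (β : (ℝ × ℝ → ℝ) → ℝ → ℝ) (hβ : β = fun φ' θ => ∫ x, φ' x ∂(P θ))
    (φ : ℝ × ℝ → ℝ)
    (hφ : φ = Set.indicator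
      ((Set.Ioi a ×ˢ Set.Ioi b₁) ∪ (Set.Iio a ×ˢ Set.Iio b₂)) (fun _ => (1 : ℝ)))
    (φplus : ℝ → ℝ × ℝ → ℝ)
    (hφplus : φplus = fun ζ => Set.indicator
      ((Set.Ioi ζ ×ˢ Set.Ioi b₁) ∪ (Set.Iio ζ ×ˢ Set.Iio b₂)) (fun _ => (1 : ℝ)))
    -- the class Φ₀(α) of regular tests of level α
    (Φ₀ : Set (ℝ × ℝ → ℝ))
    (hΦ₀ : Φ₀ = {φ' : ℝ × ℝ → ℝ | Measurable φ' ∧ (∀ x, φ' x ∈ Set.Icc (0 : ℝ) 1) ∧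
      β φ' 0 = α ∧ Continuous (fun θ : ℝ => 1 - β φ' θ) ∧
      ∀ ε : ℝ, 0 < ε → ∃ K : Set ℝ, IsCompact K ∧ {θ : ℝ | ε ≤ 1 - β φ' θ} ⊆ K})
    -- π is a probability measure concentrated on (0,∞)
    (π : Measure ℝ) (hπprob : IsProbabilityMeasure π)
    (hπ : π (Set.Ioi (0 : ℝ)) = 1) :
    (∃ ζ : ℝ, φplus ζ ∈ Φ₀ ∧ (∫ θ, β φ θ ∂π) < ∫ θ, β (φplus ζ) θ ∂π) ∧
      ¬ (φ ∈ Φ₀ ∧ ∀ φ' ∈ Φ₀, (∫ θ, β φ' θ ∂π) ≤ ∫ θ, β φ θ ∂π) := by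
  obtain ⟨hα0, hα1⟩ := hα
  have hf₁ : Integrable f₁ := aux_integrable h₁i
  have hf₂ : Integrable f₂ := aux_integrable h₂i
  set F₁ := cdf' f₁ with hF₁
  set F₂ := cdf' f₂ with hF₂
  -- quantile identities
  have hFb₁ : F₂ b₁ = 1 - α := by
    rw [hb₁]
    exact cdf_quantile h₂p hf₂ h₂i (by linarith) (by linarith)
  have hFb₂ : F₂ b₂ = α := by
    rw [hb₂]
    exact cdf_quantile h₂p hf₂ h₂i hα0 hα1
  -- the power formula
  have hbf : ∀ ζ θ : ℝ, β (φplus ζ) θ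
      = (1 - F₁ (ζ - θ)) * (1 - F₂ (b₁ - θ)) + F₁ (ζ - θ) * F₂ (b₂ - θ) := by
    intro ζ θ
    rw [hβ, hP, hφplus]
    exact beta_formula f₁ f₂ h₁c h₂c h₁p h₂p hf₁ hf₂ h₁i h₂i ζ b₁ b₂ θ
  have hφeq : φ = φplus a := by rw [hφ, hφplus]
  -- bounds on cdfs
  have hF₁01 : ∀ t, F₁ t ∈ Set.Icc (0:ℝ) 1 :=
    fun t => ⟨cdf_nonneg h₁p t, cdf_le_one h₁p hf₁ h₁i t⟩
  have hF₂01 : ∀ t, F₂ t ∈ Set.Icc (0:ℝ) 1 :=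
    fun t => ⟨cdf_nonneg h₂p t, cdf_le_one h₂p hf₂ h₂i t⟩
  -- β values lie in [0,1]
  have hβ01 : ∀ ζ θ : ℝ, β (φplus ζ) θ ∈ Set.Icc (0:ℝ) 1 := by
    intro ζ θ
    rw [hbf]
    obtain ⟨hu0, hu1⟩ := hF₁01 (ζ - θ)
    obtain ⟨hv0, hv1⟩ := hF₂01 (b₁ - θ)
    obtain ⟨hq0, hq1⟩ := hF₂01 (b₂ - θ)
    constructor
    · nlinarith
    · nlinarith
  -- membership in Φ₀ for every ζ
  have hmem : ∀ ζ : ℝ, φplus ζ ∈ Φ₀ := by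
    intro ζ
    have hAmeas : MeasurableSet ((Set.Ioi ζ ×ˢ Set.Ioi b₁) ∪ (Set.Iio ζ ×ˢ Set.Iio b₂)) :=
      (measurableSet_Ioi.prod measurableSet_Ioi).union
        (measurableSet_Iio.prod measurableSet_Iio)
    rw [hΦ₀]
    refine ⟨?_, ?_, ?_, ?_, ?_⟩
    · rw [hφplus]; exact measurable_const.indicator hAmeas
    · intro x
      rw [hφplus]
      show ((Set.Ioi ζ ×ˢ Set.Ioi b₁ ∪ Set.Iio ζ ×ˢ Set.Iio b₂).indicator
        (fun _ => (1:ℝ))) x ∈ Set.Icc (0:ℝ) 1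
      by_cases hx : x ∈ (Set.Ioi ζ ×ˢ Set.Ioi b₁) ∪ (Set.Iio ζ ×ˢ Set.Iio b₂)
      · rw [indicator_of_mem hx]; exact ⟨zero_le_one, le_refl 1⟩
      · rw [indicator_of_notMem hx]; exact ⟨le_refl 0, zero_le_one⟩
    · rw [hbf ζ 0]
      simp only [sub_zero]
      rw [hFb₁, hFb₂]; ring
    · have : (fun θ : ℝ => 1 - β (φplus ζ) θ)
          = fun θ => 1 - ((1 - F₁ (ζ - θ)) * (1 - F₂ (b₁ - θ)) + F₁ (ζ - θ) * F₂ (b₂ - θ)) := by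
        funext θ; rw [hbf]
      rw [this]
      have hc₁ := cdf_continuous hf₁
      have hc₂ := cdf_continuous hf₂
      fun_prop
    · -- tail condition
      intro ε hε
      have hsub : Tendsto (fun θ : ℝ => ζ - θ) atTop atBot :=
        tendsto_atBot_add_const_left _ ζ tendsto_neg_atTop_atBot
      have hsub' : Tendsto (fun θ : ℝ => ζ - θ) atBot atTop :=
        tendsto_atTop_add_const_left _ ζ tendsto_neg_atBot_atTop
      have hsubb : ∀ c : ℝ, Tendsto (fun θ : ℝ => c - θ) atTop atBot :=
        fun c => tendsto_atBot_add_const_left _ c tendsto_neg_atTop_atBot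
      have hsubb' : ∀ c : ℝ, Tendsto (fun θ : ℝ => c - θ) atBot atTop :=
        fun c => tendsto_atTop_add_const_left _ c tendsto_neg_atBot_atTop
      have htop : Tendsto (fun θ : ℝ => 1 - β (φplus ζ) θ) atTop (𝓝 0) := by
        have h1 : Tendsto (fun θ : ℝ => β (φplus ζ) θ) atTop (𝓝 1) := by
          have e : (fun θ : ℝ => β (φplus ζ) θ)
              = fun θ => (1 - F₁ (ζ - θ)) * (1 - F₂ (b₁ - θ)) + F₁ (ζ - θ) * F₂ (b₂ - θ) := by
            funext θ; rw [hbf]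
          rw [e]
          have t1 : Tendsto (fun θ : ℝ => F₁ (ζ - θ)) atTop (𝓝 0) :=
            (cdf_tendsto_atBot hf₁).comp (hsubb ζ)
          have t2 : Tendsto (fun θ : ℝ => F₂ (b₁ - θ)) atTop (𝓝 0) :=
            (cdf_tendsto_atBot hf₂).comp (hsubb b₁)
          have t3 : Tendsto (fun θ : ℝ => F₂ (b₂ - θ)) atTop (𝓝 0) :=
            (cdf_tendsto_atBot hf₂).comp (hsubb b₂)
          have := (((tendsto_const_nhds (x := (1:ℝ))).sub t1).mul
            ((tendsto_const_nhds (x := (1:ℝ))).sub t2)).add (t1.mul t3)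
          simpa using this
        have := (tendsto_const_nhds (x := (1:ℝ)) (f := atTop)).sub h1
        simpa using this
      have hbot : Tendsto (fun θ : ℝ => 1 - β (φplus ζ) θ) atBot (𝓝 0) := by
        have h1 : Tendsto (fun θ : ℝ => β (φplus ζ) θ) atBot (𝓝 1) := by
          have e : (fun θ : ℝ => β (φplus ζ) θ)
              = fun θ => (1 - F₁ (ζ - θ)) * (1 - F₂ (b₁ - θ)) + F₁ (ζ - θ) * F₂ (b₂ - θ) := by
            funext θ; rw [hbf]
          rw [e]
          have t1 : Tendsto (fun θ : ℝ => F₁ (ζ - θ)) atBot (𝓝 1) :=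
            (cdf_tendsto_atTop hf₁ h₁i).comp (hsubb' ζ)
          have t2 : Tendsto (fun θ : ℝ => F₂ (b₁ - θ)) atBot (𝓝 1) :=
            (cdf_tendsto_atTop hf₂ h₂i).comp (hsubb' b₁)
          have t3 : Tendsto (fun θ : ℝ => F₂ (b₂ - θ)) atBot (𝓝 1) :=
            (cdf_tendsto_atTop hf₂ h₂i).comp (hsubb' b₂)
          have := (((tendsto_const_nhds (x := (1:ℝ))).sub t1).mul
            ((tendsto_const_nhds (x := (1:ℝ))).sub t2)).add (t1.mul t3)
          simpa using this
        have := (tendsto_const_nhds (x := (1:ℝ)) (f := atBot)).sub h1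
        simpa using this
      obtain ⟨T, hT⟩ := (htop.eventually (eventually_lt_nhds hε)).exists_forall_of_atTop
      obtain ⟨B, hB⟩ := (hbot.eventually (eventually_lt_nhds hε)).exists_forall_of_atBot
      refine ⟨Set.Icc B T, isCompact_Icc, ?_⟩
      intro θ hθ
      simp only [mem_setOf_eq] at hθ
      constructor
      · by_contra h; push_neg at h
        exact absurd hθ (not_le.2 (hB θ h.le))
      · by_contra h; push_neg at h
        exact absurd hθ (not_le.2 (hT θ h.le))
  -- the strict improvement with ζ = a - 1
  have hmain : (∫ θ, β φ θ ∂π) < ∫ θ, β (φplus (a-1)) θ ∂π := by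
    have hint : ∀ ζ : ℝ, Integrable (fun θ => β (φplus ζ) θ) π := by
      intro ζ
      have hcont : Continuous (fun θ => β (φplus ζ) θ) := by
        have e : (fun θ : ℝ => β (φplus ζ) θ)
            = fun θ => (1 - F₁ (ζ - θ)) * (1 - F₂ (b₁ - θ)) + F₁ (ζ - θ) * F₂ (b₂ - θ) := by
          funext θ; rw [hbf]
        rw [e]
        have hc₁ := cdf_continuous hf₁
        have hc₂ := cdf_continuous hf₂
        fun_prop
      refine Integrable.mono' (integrable_const 1) hcont.aestronglyMeasurable ?_
      refine Filter.Eventually.of_forall (fun θ => ?_)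
      obtain ⟨h0, h1⟩ := hβ01 ζ θ
      rw [Real.norm_eq_abs, abs_le]; exact ⟨by linarith, h1⟩
    set g := fun θ : ℝ => β (φplus (a-1)) θ - β (φplus a) θ with hg
    have hgpos : ∀ θ : ℝ, 0 < θ → 0 < g θ := by
      intro θ hθ
      rw [hg]
      simp only
      rw [hbf, hbf]
      have hmono₁ := cdf_strictMono h₁p hf₁ (show a - 1 - θ < a - θ by linarith)
      have hr : F₂ (b₁ - θ) < 1 - α := by
        rw [← hFb₁]; exact cdf_strictMono h₂p hf₂ (by linarith)
      have hq : F₂ (b₂ - θ) < α := by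
        rw [← hFb₂]; exact cdf_strictMono h₂p hf₂ (by linarith)
      nlinarith [hmono₁]
    have hcompl : π (Set.Ioi (0:ℝ))ᶜ = 0 := by
      have := measure_compl (measurableSet_Ioi (a := (0:ℝ))) (measure_ne_top π _)
      rw [hπ, hπprob.measure_univ] at this
      simpa using this
    have hgae : 0 ≤ᵐ[π] g := by
      rw [Filter.EventuallyLE, ae_iff]
      refine measure_mono_null ?_ hcompl
      intro θ hθ
      simp only [mem_setOf_eq, Pi.zero_apply, not_le] at hθ
      simp only [mem_compl_iff, mem_Ioi, not_lt]
      by_contra h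
      push_neg at h
      exact absurd (hgpos θ h) (not_lt.2 hθ.le)
    have hgint : Integrable g π := (hint (a-1)).sub (hint a)
    have hpos : 0 < ∫ θ, g θ ∂π := by
      rw [integral_pos_iff_support_of_nonneg_ae hgae hgint]
      have hsub2 : Set.Ioi (0:ℝ) ⊆ Function.support g := fun θ hθ => (hgpos θ hθ).ne'
      refine lt_of_lt_of_le ?_ (measure_mono hsub2)
      rw [hπ]; norm_num
    have heq : ∫ θ, g θ ∂π
        = (∫ θ, β (φplus (a-1)) θ ∂π) - ∫ θ, β (φplus a) θ ∂π :=
      integral_sub (hint (a-1)) (hint a)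
    rw [hφeq]
    linarith
  refine ⟨⟨a - 1, hmem (a-1), hmain⟩, ?_⟩
  rintro ⟨hφΦ, hopt⟩
  exact absurd (hopt (φplus (a-1)) (hmem (a-1))) (not_le.2 hmain)
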